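/- Let δ > 0, λ₁ > 0, λ₂ < 0. The kernel V satisfies the partial differential equation ∂_t² V + (λ₁ + λ₂) ∂²_{yt} V + λ₁λ₂ ∂_y² V + δ ∂_t V = 0 on {(y,t) : t ≥ 0, λ₂ t ≤ y ≤ λ₁ t}. Moreover, for every t ≥ 0: V(λ₁ t, t) = e^{−δλ₁ t/(λ₁−λ₂)}/(λ₁−λ₂) and V(λ₂ t, t) = e^{δλ₂ t/(λ₁−λ₂)}/(λ₁−λ₂); ∂_t V(λ₁ t, t) = (2δλ₁λ₂/(λ₁−λ₂)²)(1 − I₀″(0) δ λ₁ t/(λ₁−λ₂)) V(λ₁ t, t); ∂_y V(λ₁ t, t) = (−δ(λ₁+λ₂)/(λ₁−λ₂)² + 2δ²λ₁λ₂ t I₀″(0)/(λ₁−λ₂)³) V(λ₁ t, t); and ∂_y V(λ₂ t, t) = (−δ(λ₁+λ₂)/(λ₁−λ₂)² − 2δ²λ₁λ₂ t I₀″(0)/(λ₁−λ₂)³) V(λ₂ t, t). -/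

import Mathlib

set_option maxHeartbeats 1000000


open MeasureTheory

/-- Modified Bessel function of the first kind, order 0. -/
noncomputable def besselI0 (x : ℝ) : ℝ :=
  ∑' n : ℕ, (1 / ((n.factorial : ℝ)) ^ 2) * (x / 2) ^ (2 * n)

noncomputable def bcoef (n : ℕ) : ℝ := 1 / ((n.factorial : ℝ)) ^ 2

noncomputable def pser (a : ℕ → ℝ) (u : ℝ) : ℝ := ∑' n : ℕ, a n * u ^ n

noncomputable def dser (a : ℕ → ℝ) : ℕ → ℝ := fun n => a (n + 1) * ((n : ℝ) + 1)

lemma fact_one_le (n : ℕ) : (1 : ℝ) ≤ (n.factorial : ℝ) :=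
  Nat.one_le_cast.mpr n.factorial_pos

lemma fact_pos (n : ℕ) : (0 : ℝ) < (n.factorial : ℝ) := lt_of_lt_of_le one_pos (fact_one_le n)

lemma bcoef_bound (n : ℕ) : |bcoef n| ≤ 1 / n.factorial := by
  have h1 := fact_one_le n
  have h2 := fact_pos n
  rw [bcoef, abs_of_nonneg (by positivity)]
  rw [div_le_div_iff₀ (by positivity) h2]
  nlinarith

lemma dser_bcoef_bound (n : ℕ) : |dser bcoef n| ≤ 1 / n.factorial := by
  have h1 := fact_one_le n
  have h2 := fact_pos n
  have h3 : ((n+1).factorial : ℝ) = ((n:ℝ) + 1) * n.factorial := by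
    push_cast [Nat.factorial_succ]; ring
  rw [dser, bcoef, abs_of_nonneg (by positivity)]
  rw [div_mul_eq_mul_div, one_mul, div_le_div_iff₀ (by positivity) h2, h3]
  have hx : (1:ℝ) ≤ ((n:ℝ)+1) * n.factorial := by nlinarith [(Nat.cast_nonneg n : (0:ℝ) ≤ (n:ℝ))]
  nlinarith [hx, sq_nonneg (((n:ℝ)+1) * (n.factorial:ℝ) - 1)]

lemma dser_dser_bcoef_bound (n : ℕ) : |dser (dser bcoef) n| ≤ 1 / n.factorial := by
  have h1 := fact_one_le n
  have h2 := fact_pos n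
  have h3 : ((n+1).factorial : ℝ) = ((n:ℝ) + 1) * n.factorial := by
    push_cast [Nat.factorial_succ]; ring
  have h4 : ((n+2).factorial : ℝ) = ((n:ℝ) + 2) * (((n:ℝ) + 1) * n.factorial) := by
    push_cast [Nat.factorial_succ]; ring
  rw [dser, dser, bcoef, abs_of_nonneg (by positivity)]
  rw [div_mul_eq_mul_div, one_mul, div_mul_eq_mul_div, div_le_div_iff₀ (by positivity) h2, h4]
  push_cast
  have hx : (1:ℝ) ≤ ((n:ℝ)+2) * (((n:ℝ)+1) * n.factorial) := by nlinarith [(Nat.cast_nonneg n : (0:ℝ) ≤ (n:ℝ))]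
  nlinarith [hx, sq_nonneg (((n:ℝ)+2) * (((n:ℝ)+1) * (n.factorial:ℝ)) - 1)]

lemma summable_pser {a : ℕ → ℝ} (ha : ∀ n, |a n| ≤ 1 / n.factorial) (u : ℝ) :
    Summable (fun n => a n * u ^ n) := by
  apply Summable.of_norm
  apply Summable.of_nonneg_of_le (fun n => norm_nonneg _)
    (fun n => ?_) (Real.summable_pow_div_factorial |u|)
  have h2 := fact_pos n
  calc ‖a n * u ^ n‖ = |a n| * |u| ^ n := by
        rw [norm_mul, norm_pow]; rfl
    _ ≤ (1 / n.factorial) * |u| ^ n := by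
        apply mul_le_mul_of_nonneg_right (ha n) (by positivity)
    _ = |u| ^ n / n.factorial := by ring

lemma pser_shift {a : ℕ → ℝ} (ha : ∀ n, |a n| ≤ 1 / n.factorial) (u : ℝ) :
    pser a u = a 0 + ∑' n : ℕ, a (n + 1) * u ^ (n + 1) := by
  rw [pser, Summable.tsum_eq_zero_add (summable_pser ha u)]
  simp

lemma hasDerivAt_pser {a : ℕ → ℝ} (ha : ∀ n, |a n| ≤ 1 / n.factorial)
    (ha' : ∀ n, |dser a n| ≤ 1 / n.factorial) (x : ℝ) :
    HasDerivAt (pser a) (pser (dser a) x) x := by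
  have hfun : pser a = fun u => a 0 + ∑' n : ℕ, a (n + 1) * u ^ (n + 1) :=
    funext fun u => pser_shift ha u
  rw [hfun]
  have key : HasDerivAt (fun u : ℝ => ∑' n : ℕ, a (n + 1) * u ^ (n + 1))
      (∑' n : ℕ, a (n + 1) * (((n:ℝ) + 1) * x ^ n)) x := by
    have hmem : x ∈ Metric.ball (0:ℝ) (|x| + 1) := by
      rw [Metric.mem_ball, Real.dist_eq, sub_zero]
      linarith
    refine hasDerivAt_tsum_of_isPreconnected
      (Real.summable_pow_div_factorial (|x| + 1)) Metric.isOpen_ball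
      (convex_ball (0:ℝ) (|x|+1)).isPreconnected
      (g' := fun n u => a (n + 1) * (((n:ℝ) + 1) * u ^ n))
      (fun n u _ => ?_) (fun n u hu => ?_) hmem
      ((summable_nat_add_iff 1).mpr (summable_pser ha x)) hmem
    · have h := (hasDerivAt_pow (n + 1) u).const_mul (a (n + 1))
      refine h.congr_deriv (Eq.symm ?_)
      push_cast [Nat.add_sub_cancel]
      ring
    · have hu' : |u| < |x| + 1 := by
        simpa [Metric.mem_ball, Real.dist_eq] using hu
      have h2 := fact_pos n
      have habs : |((n:ℝ)+1)| = (n:ℝ)+1 := abs_of_nonneg (by positivity)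
      calc ‖a (n+1) * (((n:ℝ) + 1) * u ^ n)‖ = (|a (n+1)| * ((n:ℝ)+1)) * |u| ^ n := by
            rw [Real.norm_eq_abs, abs_mul, abs_mul, abs_pow, habs]; ring
        _ ≤ (1 / n.factorial) * (|x| + 1) ^ n := by
            apply mul_le_mul
            · have h5 := ha' n
              rw [dser, abs_mul, habs] at h5
              exact h5
            · exact pow_le_pow_left₀ (abs_nonneg u) hu'.le n
            · positivity
            · positivity
        _ = (|x| + 1) ^ n / n.factorial := by ring
  have hD := key.const_add (a 0)
  refine hD.congr_deriv (Eq.symm ?_)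
  rw [pser]
  apply tsum_congr
  intro n
  rw [dser]
  ring

noncomputable def bf : ℝ → ℝ := pser bcoef
noncomputable def bf1 : ℝ → ℝ := pser (dser bcoef)
noncomputable def bf2 : ℝ → ℝ := pser (dser (dser bcoef))

lemma hasDerivAt_bf (x : ℝ) : HasDerivAt bf (bf1 x) x :=
  hasDerivAt_pser bcoef_bound dser_bcoef_bound x

lemma hasDerivAt_bf1 (x : ℝ) : HasDerivAt bf1 (bf2 x) x :=
  hasDerivAt_pser dser_bcoef_bound dser_dser_bcoef_bound x

lemma pser_zero (a : ℕ → ℝ) : pser a 0 = a 0 := by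
  rw [pser, tsum_eq_single 0]
  · simp
  · intro n hn
    simp [zero_pow hn]

lemma bf_zero : bf 0 = 1 := by simp [bf, pser_zero, bcoef]
lemma bf1_zero : bf1 0 = 1 := by simp [bf1, pser_zero, dser, bcoef]
lemma bf2_zero : bf2 0 = 1/2 := by
  simp [bf2, pser_zero, dser, bcoef]
  norm_num [Nat.factorial]

lemma coef_id (n : ℕ) : bcoef (n+2) * (((n:ℝ)+1)+1) * ((n:ℝ)+1) + bcoef (n+2) * (((n:ℝ)+1)+1) = bcoef (n+1) := by
  simp only [bcoef]
  have h4 : ((n+2).factorial : ℝ) = ((n:ℝ)+2) * (n+1).factorial := by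
    push_cast [Nat.factorial_succ]; ring
  have h7 : ((n+1).factorial:ℝ) ≠ 0 := by positivity
  have h6 : ((n:ℝ)+2) ≠ 0 := by positivity
  rw [h4]
  field_simp
  ring

lemma bf_rel (u : ℝ) : u * bf2 u + bf1 u = bf u := by
  have hsum2 : Summable (fun n => dser (dser bcoef) n * u ^ n) :=
    summable_pser dser_dser_bcoef_bound u
  have h1 : u * bf2 u = ∑' n : ℕ, dser (dser bcoef) n * u ^ (n+1) := by
    rw [bf2, pser, ← tsum_mul_left]
    apply tsum_congr; intro n; ring
  rw [h1, bf1, pser_shift dser_bcoef_bound, bf, pser_shift bcoef_bound]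
  have hsum2' : Summable (fun n : ℕ => dser (dser bcoef) n * u ^ (n+1)) := by
    have := hsum2.mul_right u
    apply this.congr
    intro n; ring
  have hsum1' : Summable (fun n : ℕ => dser bcoef (n+1) * u ^ (n+1)) := by
    exact (summable_nat_add_iff 1).mpr (summable_pser dser_bcoef_bound u)
  rw [add_comm (∑' n : ℕ, dser (dser bcoef) n * u ^ (n+1)), add_assoc,
    ← Summable.tsum_add hsum1' hsum2']
  congr 1
  · simp [dser, bcoef]
  · apply tsum_congr
    intro n
    rw [← add_mul]
    congr 1
    simp only [dser]
    push_cast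
    linear_combination coef_id n

lemma besselI0_eq (x : ℝ) : besselI0 x = bf (x^2/4) := by
  rw [besselI0, bf, pser]
  apply tsum_congr
  intro n
  rw [bcoef, pow_mul]
  congr 2
  ring

lemma besselI0_second_deriv : iteratedDeriv 2 besselI0 0 = 1/2 := by
  have hin : ∀ x : ℝ, HasDerivAt (fun y : ℝ => y^2/4) (x/2) x := by
    intro x
    have := (hasDerivAt_pow 2 x).div_const 4
    refine this.congr_deriv (Eq.symm ?_)
    push_cast; ring
  have hb : ∀ x : ℝ, HasDerivAt besselI0 (bf1 (x^2/4) * (x/2)) x := by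
    intro x
    have h := (hasDerivAt_bf (x^2/4)).comp x (hin x)
    have hfun : besselI0 = fun y : ℝ => bf (y^2/4) := funext besselI0_eq
    rw [hfun]
    exact h
  have hderiv : deriv besselI0 = fun x => bf1 (x^2/4) * (x/2) :=
    funext fun x => (hb x).deriv
  rw [show (2:ℕ) = 1 + 1 from rfl, iteratedDeriv_succ, iteratedDeriv_one, hderiv]
  have h2 : HasDerivAt (fun x : ℝ => bf1 (x^2/4) * (x/2))
      ((bf2 (0^2/4) * (0/2)) * (0/2) + bf1 (0^2/4) * (1/2)) 0 := by
    have ha := ((hasDerivAt_bf1 ((0:ℝ)^2/4)).comp 0 (hin 0))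
    have hc : HasDerivAt (fun x : ℝ => x/2) (1/2 : ℝ) 0 := by
      simpa using (hasDerivAt_id (0:ℝ)).div_const 2
    exact ha.mul hc
  rw [h2.deriv]
  norm_num [bf1_zero]

/-- The kernel `V` of the general damped wave equation, written via the power series of `I₀`
(this coincides on `{t ≥ 0, λ₂t ≤ y ≤ λ₁t}` with the formula involving square roots). -/
noncomputable def Vker (d l1 l2 y t : ℝ) : ℝ :=
  (l1 - l2)⁻¹ *
    Real.exp (-(2 * d / (l1 - l2) ^ 2) * (-(l1 * l2) * t + ((l1 + l2) / 2) * y)) *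
    ∑' n : ℕ, (1 / ((n.factorial : ℝ)) ^ 2) *
      ((d ^ 2 * l1 * l2 / (l1 - l2) ^ 4) * ((y - l1 * t) * (y - l2 * t))) ^ n

noncomputable def Aex (d l1 l2 y t : ℝ) : ℝ :=
  -(2 * d / (l1 - l2) ^ 2) * (-(l1 * l2) * t + ((l1 + l2) / 2) * y)

noncomputable def Qq (d l1 l2 y t : ℝ) : ℝ :=
  d ^ 2 * l1 * l2 / (l1 - l2) ^ 4 * ((y - l1 * t) * (y - l2 * t))

noncomputable def QT (d l1 l2 y t : ℝ) : ℝ :=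
  d ^ 2 * l1 * l2 / (l1 - l2) ^ 4 * (2 * l1 * l2 * t - (l1 + l2) * y)

noncomputable def QY (d l1 l2 y t : ℝ) : ℝ :=
  d ^ 2 * l1 * l2 / (l1 - l2) ^ 4 * (2 * y - (l1 + l2) * t)

noncomputable def VT (d l1 l2 y t : ℝ) : ℝ :=
  (l1 - l2)⁻¹ * (Real.exp (Aex d l1 l2 y t) *
    (2 * d * l1 * l2 / (l1 - l2) ^ 2 * bf (Qq d l1 l2 y t)
      + QT d l1 l2 y t * bf1 (Qq d l1 l2 y t)))

noncomputable def VY (d l1 l2 y t : ℝ) : ℝ :=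
  (l1 - l2)⁻¹ * (Real.exp (Aex d l1 l2 y t) *
    (-(d * (l1 + l2)) / (l1 - l2) ^ 2 * bf (Qq d l1 l2 y t)
      + QY d l1 l2 y t * bf1 (Qq d l1 l2 y t)))

lemma Vker_eq (d l1 l2 y t : ℝ) :
    Vker d l1 l2 y t = (l1 - l2)⁻¹ * Real.exp (Aex d l1 l2 y t) * bf (Qq d l1 l2 y t) := rfl

lemma hA_t (d l1 l2 y t : ℝ) :
    HasDerivAt (fun s => Aex d l1 l2 y s) (2 * d * l1 * l2 / (l1 - l2) ^ 2) t := by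
  simp only [Aex]
  have h : HasDerivAt (fun s : ℝ => -(l1 * l2) * s + ((l1 + l2) / 2) * y) (-(l1 * l2)) t := by
    simpa using ((hasDerivAt_id t).const_mul (-(l1 * l2))).add_const (((l1 + l2) / 2) * y)
  have h2 := h.const_mul (-(2 * d / (l1 - l2) ^ 2))
  refine h2.congr_deriv (Eq.symm ?_)
  ring

lemma hA_y (d l1 l2 y t : ℝ) :
    HasDerivAt (fun z => Aex d l1 l2 z t) (-(d * (l1 + l2)) / (l1 - l2) ^ 2) y := by
  simp only [Aex]
  have h : HasDerivAt (fun z : ℝ => -(l1 * l2) * t + ((l1 + l2) / 2) * z) ((l1 + l2) / 2) y := by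
    simpa using ((hasDerivAt_id y).const_mul ((l1 + l2) / 2)).const_add (-(l1 * l2) * t)
  have h2 := h.const_mul (-(2 * d / (l1 - l2) ^ 2))
  refine h2.congr_deriv (Eq.symm ?_)
  rw [neg_div, neg_mul, neg_inj, div_mul_div_comm,
    show 2 * d * (l1 + l2) = 2 * (d * (l1 + l2)) by ring,
    show (l1 - l2) ^ 2 * 2 = 2 * (l1 - l2) ^ 2 by ring,
    mul_div_mul_left _ _ (two_ne_zero)]

lemma hQ_t (d l1 l2 y t : ℝ) :
    HasDerivAt (fun s => Qq d l1 l2 y s) (QT d l1 l2 y t) t := by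
  simp only [Qq]
  have h1 : HasDerivAt (fun s : ℝ => y - l1 * s) (-l1) t := by
    simpa using ((hasDerivAt_id t).const_mul l1).const_sub y
  have h2 : HasDerivAt (fun s : ℝ => y - l2 * s) (-l2) t := by
    simpa using ((hasDerivAt_id t).const_mul l2).const_sub y
  have h := (h1.mul h2).const_mul (d ^ 2 * l1 * l2 / (l1 - l2) ^ 4)
  refine h.congr_deriv (Eq.symm ?_)
  simp only [QT]
  ring

lemma hQ_y (d l1 l2 y t : ℝ) :
    HasDerivAt (fun z => Qq d l1 l2 z t) (QY d l1 l2 y t) y := by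
  simp only [Qq]
  have h1 : HasDerivAt (fun z : ℝ => z - l1 * t) 1 y := (hasDerivAt_id y).sub_const _
  have h2 : HasDerivAt (fun z : ℝ => z - l2 * t) 1 y := (hasDerivAt_id y).sub_const _
  have h := (h1.mul h2).const_mul (d ^ 2 * l1 * l2 / (l1 - l2) ^ 4)
  refine h.congr_deriv (Eq.symm ?_)
  simp only [QY]
  ring

lemma hQT_t (d l1 l2 y t : ℝ) :
    HasDerivAt (fun s => QT d l1 l2 y s) (d ^ 2 * l1 * l2 / (l1 - l2) ^ 4 * (2 * l1 * l2)) t := by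
  simp only [QT]
  have h : HasDerivAt (fun s : ℝ => 2 * l1 * l2 * s - (l1 + l2) * y) (2 * l1 * l2) t := by
    simpa using ((hasDerivAt_id t).const_mul (2 * l1 * l2)).sub_const ((l1 + l2) * y)
  have h2 := h.const_mul (d ^ 2 * l1 * l2 / (l1 - l2) ^ 4)
  convert h2 using 1

lemma hQT_y (d l1 l2 y t : ℝ) :
    HasDerivAt (fun z => QT d l1 l2 z t)
      (-(d ^ 2 * l1 * l2 / (l1 - l2) ^ 4 * (l1 + l2))) y := by
  simp only [QT]
  have h : HasDerivAt (fun z : ℝ => 2 * l1 * l2 * t - (l1 + l2) * z) (-(l1 + l2)) y := by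
    simpa using ((hasDerivAt_id y).const_mul (l1 + l2)).const_sub (2 * l1 * l2 * t)
  have h2 := h.const_mul (d ^ 2 * l1 * l2 / (l1 - l2) ^ 4)
  refine h2.congr_deriv (Eq.symm ?_)
  ring

lemma hQY_y (d l1 l2 y t : ℝ) :
    HasDerivAt (fun z => QY d l1 l2 z t) (d ^ 2 * l1 * l2 / (l1 - l2) ^ 4 * 2) y := by
  simp only [QY]
  have h : HasDerivAt (fun z : ℝ => 2 * z - (l1 + l2) * t) 2 y := by
    simpa using ((hasDerivAt_id y).const_mul 2).sub_const ((l1 + l2) * t)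
  have h2 := h.const_mul (d ^ 2 * l1 * l2 / (l1 - l2) ^ 4)
  convert h2 using 1

lemma hVker_t (d l1 l2 y t : ℝ) :
    HasDerivAt (fun s => Vker d l1 l2 y s) (VT d l1 l2 y t) t := by
  have hE := (hA_t d l1 l2 y t).exp
  have hB := (hasDerivAt_bf (Qq d l1 l2 y t)).comp t (hQ_t d l1 l2 y t)
  have h := (hE.mul hB).const_mul (l1 - l2)⁻¹
  have hfun : (fun s => Vker d l1 l2 y s)
      = fun s => (l1 - l2)⁻¹ * (Real.exp (Aex d l1 l2 y s) * bf (Qq d l1 l2 y s)) := by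
    funext s; rw [Vker_eq]; ring
  rw [hfun]
  simp only [Function.comp_def] at h
  refine h.congr_deriv (Eq.symm ?_)
  simp only [VT]
  ring

lemma hVker_y (d l1 l2 y t : ℝ) :
    HasDerivAt (fun z => Vker d l1 l2 z t) (VY d l1 l2 y t) y := by
  have hE := (hA_y d l1 l2 y t).exp
  have hB := (hasDerivAt_bf (Qq d l1 l2 y t)).comp y (hQ_y d l1 l2 y t)
  have h := (hE.mul hB).const_mul (l1 - l2)⁻¹
  have hfun : (fun z => Vker d l1 l2 z t)
      = fun z => (l1 - l2)⁻¹ * (Real.exp (Aex d l1 l2 z t) * bf (Qq d l1 l2 z t)) := by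
    funext z; rw [Vker_eq]; ring
  rw [hfun]
  simp only [Function.comp_def] at h
  refine h.congr_deriv (Eq.symm ?_)
  simp only [VY]
  ring

lemma hVT_t (d l1 l2 y t : ℝ) :
    HasDerivAt (fun s => VT d l1 l2 y s)
      ((l1 - l2)⁻¹ * (Real.exp (Aex d l1 l2 y t) *
        ((2 * d * l1 * l2 / (l1 - l2) ^ 2) ^ 2 * bf (Qq d l1 l2 y t)
          + (2 * (2 * d * l1 * l2 / (l1 - l2) ^ 2) * QT d l1 l2 y t
              + d ^ 2 * l1 * l2 / (l1 - l2) ^ 4 * (2 * l1 * l2)) * bf1 (Qq d l1 l2 y t)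
          + QT d l1 l2 y t ^ 2 * bf2 (Qq d l1 l2 y t)))) t := by
  have hE := (hA_t d l1 l2 y t).exp
  have hB := (hasDerivAt_bf (Qq d l1 l2 y t)).comp t (hQ_t d l1 l2 y t)
  have hB1 := (hasDerivAt_bf1 (Qq d l1 l2 y t)).comp t (hQ_t d l1 l2 y t)
  have hsum := (hB.const_mul (2 * d * l1 * l2 / (l1 - l2) ^ 2)).add ((hQT_t d l1 l2 y t).mul hB1)
  have h := (hE.mul hsum).const_mul (l1 - l2)⁻¹
  simp only [Function.comp_def] at h
  simp only [VT]
  refine h.congr_deriv (Eq.symm ?_)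
  simp only [Pi.add_apply, Pi.mul_apply]
  ring

lemma hVT_y (d l1 l2 y t : ℝ) :
    HasDerivAt (fun z => VT d l1 l2 z t)
      ((l1 - l2)⁻¹ * (Real.exp (Aex d l1 l2 y t) *
        ((-(d * (l1 + l2)) / (l1 - l2) ^ 2) * (2 * d * l1 * l2 / (l1 - l2) ^ 2)
            * bf (Qq d l1 l2 y t)
          + ((-(d * (l1 + l2)) / (l1 - l2) ^ 2) * QT d l1 l2 y t
              + (2 * d * l1 * l2 / (l1 - l2) ^ 2) * QY d l1 l2 y t
              - d ^ 2 * l1 * l2 / (l1 - l2) ^ 4 * (l1 + l2)) * bf1 (Qq d l1 l2 y t)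
          + QT d l1 l2 y t * QY d l1 l2 y t * bf2 (Qq d l1 l2 y t)))) y := by
  have hE := (hA_y d l1 l2 y t).exp
  have hB := (hasDerivAt_bf (Qq d l1 l2 y t)).comp y (hQ_y d l1 l2 y t)
  have hB1 := (hasDerivAt_bf1 (Qq d l1 l2 y t)).comp y (hQ_y d l1 l2 y t)
  have hsum := (hB.const_mul (2 * d * l1 * l2 / (l1 - l2) ^ 2)).add ((hQT_y d l1 l2 y t).mul hB1)
  have h := (hE.mul hsum).const_mul (l1 - l2)⁻¹
  simp only [Function.comp_def] at h
  simp only [VT]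
  refine h.congr_deriv (Eq.symm ?_)
  simp only [Pi.add_apply, Pi.mul_apply]
  ring

lemma hVY_y (d l1 l2 y t : ℝ) :
    HasDerivAt (fun z => VY d l1 l2 z t)
      ((l1 - l2)⁻¹ * (Real.exp (Aex d l1 l2 y t) *
        ((-(d * (l1 + l2)) / (l1 - l2) ^ 2) ^ 2 * bf (Qq d l1 l2 y t)
          + (2 * (-(d * (l1 + l2)) / (l1 - l2) ^ 2) * QY d l1 l2 y t
              + d ^ 2 * l1 * l2 / (l1 - l2) ^ 4 * 2) * bf1 (Qq d l1 l2 y t)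
          + QY d l1 l2 y t ^ 2 * bf2 (Qq d l1 l2 y t)))) y := by
  have hE := (hA_y d l1 l2 y t).exp
  have hB := (hasDerivAt_bf (Qq d l1 l2 y t)).comp y (hQ_y d l1 l2 y t)
  have hB1 := (hasDerivAt_bf1 (Qq d l1 l2 y t)).comp y (hQ_y d l1 l2 y t)
  have hsum := (hB.const_mul (-(d * (l1 + l2)) / (l1 - l2) ^ 2)).add
    ((hQY_y d l1 l2 y t).mul hB1)
  have h := (hE.mul hsum).const_mul (l1 - l2)⁻¹
  simp only [Function.comp_def] at h
  simp only [VY]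
  refine h.congr_deriv (Eq.symm ?_)
  simp only [Pi.add_apply, Pi.mul_apply]
  ring

/-- Lemma 2.4: the kernel `V` solves the damped wave equation
`∂ₜ²V + (λ₁+λ₂)∂²_{yt}V + λ₁λ₂∂_y²V + δ∂ₜV = 0` on the region `{t ≥ 0, λ₂t ≤ y ≤ λ₁t}`,
together with the explicit values of `V`, `∂ₜV` and `∂_yV` along the characteristics
`y = λ₁t` and `y = λ₂t`. -/
theorem Vker_pde_and_boundary_values
    (d l1 l2 : ℝ) (hd : 0 < d) (hl1 : 0 < l1) (hl2 : l2 < 0) :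
    (∀ y t : ℝ, 0 ≤ t → l2 * t ≤ y → y ≤ l1 * t →
        iteratedDeriv 2 (fun s => Vker d l1 l2 y s) t
          + (l1 + l2) * deriv (fun z => deriv (fun s => Vker d l1 l2 z s) t) y
          + l1 * l2 * iteratedDeriv 2 (fun z => Vker d l1 l2 z t) y
          + d * deriv (fun s => Vker d l1 l2 y s) t = 0)
      ∧ (∀ t : ℝ, 0 ≤ t →
          Vker d l1 l2 (l1 * t) t = Real.exp (-(d * l1 * t) / (l1 - l2)) / (l1 - l2)
          ∧ Vker d l1 l2 (l2 * t) t = Real.exp (d * l2 * t / (l1 - l2)) / (l1 - l2)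
          ∧ deriv (fun s => Vker d l1 l2 (l1 * t) s) t
              = (2 * d * l1 * l2 / (l1 - l2) ^ 2) *
                  (1 - iteratedDeriv 2 besselI0 0 * d * l1 * t / (l1 - l2)) *
                  Vker d l1 l2 (l1 * t) t
          ∧ deriv (fun z => Vker d l1 l2 z t) (l1 * t)
              = (-(d * (l1 + l2)) / (l1 - l2) ^ 2
                  + 2 * d ^ 2 * l1 * l2 * t * iteratedDeriv 2 besselI0 0 / (l1 - l2) ^ 3) *
                  Vker d l1 l2 (l1 * t) t
          ∧ deriv (fun z => Vker d l1 l2 z t) (l2 * t)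
              = (-(d * (l1 + l2)) / (l1 - l2) ^ 2
                  - 2 * d ^ 2 * l1 * l2 * t * iteratedDeriv 2 besselI0 0 / (l1 - l2) ^ 3) *
                  Vker d l1 l2 (l2 * t) t) := by
  
  have hL : l1 - l2 ≠ 0 := ne_of_gt (by linarith)
  constructor
  · intro y t _ _ _
    have i2 : ∀ f : ℝ → ℝ, iteratedDeriv 2 f = deriv (deriv f) := fun f => by
      rw [show (2 : ℕ) = 1 + 1 from rfl, iteratedDeriv_succ, iteratedDeriv_one]
    have e1 : deriv (fun s => Vker d l1 l2 y s) = fun s => VT d l1 l2 y s :=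
      funext fun s => (hVker_t d l1 l2 y s).deriv
    have e2 : (fun z => deriv (fun s => Vker d l1 l2 z s) t) = fun z => VT d l1 l2 z t :=
      funext fun z => (hVker_t d l1 l2 z t).deriv
    have e3 : deriv (fun z => Vker d l1 l2 z t) = fun z => VY d l1 l2 z t :=
      funext fun z => (hVker_y d l1 l2 z t).deriv
    rw [i2, i2, (hVker_t d l1 l2 y t).deriv, e1, e2, e3, (hVT_t d l1 l2 y t).deriv,
      (hVT_y d l1 l2 y t).deriv, (hVY_y d l1 l2 y t).deriv]
    have hA' : (2 * d * l1 * l2 / (l1 - l2) ^ 2) ^ 2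
        + (l1 + l2) * ((-(d * (l1 + l2)) / (l1 - l2) ^ 2) * (2 * d * l1 * l2 / (l1 - l2) ^ 2))
        + l1 * l2 * (-(d * (l1 + l2)) / (l1 - l2) ^ 2) ^ 2
        + d * (2 * d * l1 * l2 / (l1 - l2) ^ 2) = d ^ 2 * l1 * l2 / (l1 - l2) ^ 2 := by
      field_simp
      ring
    have hB' : 2 * (2 * d * l1 * l2 / (l1 - l2) ^ 2) * QT d l1 l2 y t
        + (l1 + l2) * ((-(d * (l1 + l2)) / (l1 - l2) ^ 2) * QT d l1 l2 y t
            + (2 * d * l1 * l2 / (l1 - l2) ^ 2) * QY d l1 l2 y t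
            - d ^ 2 * l1 * l2 / (l1 - l2) ^ 4 * (l1 + l2))
        + d ^ 2 * l1 * l2 / (l1 - l2) ^ 4 * (2 * l1 * l2)
        + l1 * l2 * (2 * (-(d * (l1 + l2)) / (l1 - l2) ^ 2) * QY d l1 l2 y t
            + d ^ 2 * l1 * l2 / (l1 - l2) ^ 4 * 2)
        + d * QT d l1 l2 y t = -(d ^ 2 * l1 * l2 / (l1 - l2) ^ 2) := by
      simp only [QT, QY]
      field_simp
      ring
    have hC' : QT d l1 l2 y t ^ 2 + (l1 + l2) * (QT d l1 l2 y t * QY d l1 l2 y t)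
        + l1 * l2 * QY d l1 l2 y t ^ 2
        = -(d ^ 2 * l1 * l2 / (l1 - l2) ^ 2) * Qq d l1 l2 y t := by
      simp only [QT, QY, Qq]
      field_simp
      ring
    have step : (l1 - l2)⁻¹ * (Real.exp (Aex d l1 l2 y t) *
        (((2 * d * l1 * l2 / (l1 - l2) ^ 2) ^ 2
            + (l1 + l2) * ((-(d * (l1 + l2)) / (l1 - l2) ^ 2) * (2 * d * l1 * l2 / (l1 - l2) ^ 2))
            + l1 * l2 * (-(d * (l1 + l2)) / (l1 - l2) ^ 2) ^ 2
            + d * (2 * d * l1 * l2 / (l1 - l2) ^ 2)) * bf (Qq d l1 l2 y t)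
          + (2 * (2 * d * l1 * l2 / (l1 - l2) ^ 2) * QT d l1 l2 y t
              + (l1 + l2) * ((-(d * (l1 + l2)) / (l1 - l2) ^ 2) * QT d l1 l2 y t
                  + (2 * d * l1 * l2 / (l1 - l2) ^ 2) * QY d l1 l2 y t
                  - d ^ 2 * l1 * l2 / (l1 - l2) ^ 4 * (l1 + l2))
              + d ^ 2 * l1 * l2 / (l1 - l2) ^ 4 * (2 * l1 * l2)
              + l1 * l2 * (2 * (-(d * (l1 + l2)) / (l1 - l2) ^ 2) * QY d l1 l2 y t
                  + d ^ 2 * l1 * l2 / (l1 - l2) ^ 4 * 2)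
              + d * QT d l1 l2 y t) * bf1 (Qq d l1 l2 y t)
          + (QT d l1 l2 y t ^ 2 + (l1 + l2) * (QT d l1 l2 y t * QY d l1 l2 y t)
              + l1 * l2 * QY d l1 l2 y t ^ 2) * bf2 (Qq d l1 l2 y t))) = 0 := by
      rw [hA', hB', hC', ← bf_rel (Qq d l1 l2 y t)]
      ring
    refine Eq.trans ?_ step
    simp only [VT, VY]
    ring
  · intro t ht
    have hQ1 : Qq d l1 l2 (l1 * t) t = 0 := by simp [Qq]
    have hQ2 : Qq d l1 l2 (l2 * t) t = 0 := by simp [Qq]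
    refine ⟨?_, ?_, ?_, ?_, ?_⟩
    · rw [Vker_eq, hQ1, bf_zero,
        show Aex d l1 l2 (l1 * t) t = -(d * l1 * t) / (l1 - l2) by
          simp only [Aex]; field_simp; ring]
      ring
    · rw [Vker_eq, hQ2, bf_zero,
        show Aex d l1 l2 (l2 * t) t = d * l2 * t / (l1 - l2) by
          simp only [Aex]; field_simp; ring]
      ring
    · rw [(hVker_t d l1 l2 (l1 * t) t).deriv, besselI0_second_deriv, Vker_eq]
      simp only [VT, QT, hQ1, bf_zero, bf1_zero]
      field_simp
      ring
    · rw [(hVker_y d l1 l2 (l1 * t) t).deriv, besselI0_second_deriv, Vker_eq]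
      simp only [VY, QY, hQ1, bf_zero, bf1_zero]
      field_simp
      ring
    · rw [(hVker_y d l1 l2 (l2 * t) t).deriv, besselI0_second_deriv, Vker_eq]
      simp only [VY, QY, hQ2, bf_zero, bf1_zero]
      field_simp
      ring
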